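/- For every i with 2 ≤ i ≤ n, the sequence x_{i,2n+4-2i} satisfies: x_{i,2n+4-2i}(t) = false for 0 ≤ t ≤ 2^{i-1} + 2n - 1; x_{i,2n+4-2i}(t) = true whenever l·2^{i-1} + 2n ≤ t ≤ (l+1)·2^{i-1} + 2n - 1 for some odd integer l ≥ 1; and x_{i,2n+4-2i}(t) = false whenever l·2^{i-1} + 2n ≤ t ≤ (l+1)·2^{i-1} + 2n - 1 for some even integer l ≥ 2. -/

import Mathlib

private lemma two_step {p : ℕ → Prop} (h0 : p 0) (h1 : p 1) (h : ∀ t, p t → p (t+2)) :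
    ∀ t, p t := by
  intro t
  induction t using Nat.strong_induction_on with
  | _ t ih =>
    match t with
    | 0 => exact h0
    | 1 => exact h1
    | t+2 => exact h t (ih t (by omega))

private lemma key_div (P s : ℕ) (hP : 2 ≤ P) :
    (s+2)/P = s/P + (if P - 2 ≤ s % P then 1 else 0) := by
  have h0 : 0 < P := by omega
  have hr : s % P < P := Nat.mod_lt _ h0
  have h1 : P * (s/P) + s % P = s := Nat.div_add_mod s P
  have h2 : s + 2 = P * (s/P) + (s % P + 2) := by omega
  rw [h2, Nat.mul_add_div h0]
  split_ifs with h
  · have : (s % P + 2)/P = 1 := Nat.div_eq_of_lt_le (by omega) (by omega)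
    omega
  · have : (s % P + 2)/P = 0 := Nat.div_eq_of_lt (by omega)
    omega

private lemma step_arith (P s : ℕ) (hP : 2 ≤ P) :
    decide ((s+2)/P % 2 = 1) = xor (decide (P-2 ≤ s % P)) (decide (s/P % 2 = 1)) := by
  rw [key_div P s hP]
  by_cases h : P - 2 ≤ s % P <;> simp [h, ← decide_not, decide_eq_decide] <;> omega

private lemma y_arith (P s : ℕ) (hP : 2 ≤ P) :
    decide (2*P - 2 ≤ s % (2*P)) = (decide (s/P % 2 = 1) && decide (P - 2 ≤ s % P)) := by
  have h0 : 0 < P := by omega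
  have hr : s % P < P := Nat.mod_lt _ h0
  have hm : s % (P * 2) = s % P + P * (s / P % 2) := Nat.mod_mul
  have h2 : s / P % 2 = 0 ∨ s / P % 2 = 1 := Nat.mod_two_eq_zero_or_one _
  rw [show 2*P = P*2 by ring, hm]
  rcases h2 with h | h <;> by_cases hc : P - 2 ≤ s % P <;>
    simp [h, hc, decide_eq_decide, ← decide_not] <;> omega

/-- Behaviour of the delayed neurons `x_{i,2n+4-2i}` (for `2 ≤ i ≤ n`) of the counter circuit. -/
theorem stmt_3
    (n : ℕ) (hn : 2 ≤ n)
    (I : ℕ → Bool) (x : ℕ → ℕ → Bool) (x1' x2' : ℕ → Bool)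
    (y' y a b : ℕ → ℕ → Bool)
    (hI0 : I 0 = true) (hI : ∀ t, 1 ≤ t → I t = false)
    (hx0 : ∀ i, 1 ≤ i → i ≤ n → x i 0 = false)
    (hx1'0 : x1' 0 = false) (hx2'0 : x2' 0 = false)
    (hy'0 : ∀ i, 2 ≤ i → i ≤ n - 1 → y' i 0 = false)
    (hy0 : ∀ i, 2 ≤ i → i ≤ n - 1 → y i 0 = false)
    (ha0 : ∀ i, 1 < i → i < n → a i 0 = false)
    (hb0 : ∀ i, 1 < i → i < n → b i 0 = false)
    (hx1 : ∀ t, x 1 (t + 1) = (I t || x1' t))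
    (hx1' : ∀ t, x1' (t + 1) = x 1 t)
    (hx2' : ∀ t, x2' (t + 1) = (I t || !(x 2 t)))
    (hx2 : ∀ t, x 2 (t + 1) = x2' t)
    (hy2' : ∀ t, y' 2 (t + 1) = x 2 t)
    (hyi' : ∀ i, 2 < i → i < n → ∀ t, y' i (t + 1) = (x i t && y (i - 1) t))
    (hyi : ∀ i, 1 < i → i < n → ∀ t, y i (t + 1) = y' i t)
    (hai : ∀ i, 1 < i → i < n → ∀ t, a i (t + 1) = (y i t && !(x (i + 1) t)))
    (hbi : ∀ i, 1 < i → i < n → ∀ t, b i (t + 1) = (!(y i t) && x (i + 1) t))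
    (hxi : ∀ i, 2 < i → i ≤ n → ∀ t, x i (t + 1) = (a (i - 1) t || b (i - 1) t))
    (xd : ℕ → ℕ → ℕ → Bool)
    (hxd0 : ∀ i j, 2 ≤ i → i ≤ n → 1 ≤ j → j ≤ 2 * n + 4 - 2 * i → xd i j 0 = false)
    (hxd1 : ∀ i, 2 ≤ i → i ≤ n → ∀ t, xd i 1 (t + 1) = x i t)
    (hxdj : ∀ i j, 2 ≤ i → i ≤ n → 2 ≤ j → j ≤ 2 * n + 4 - 2 * i → ∀ t,
      xd i j (t + 1) = xd i (j - 1) t) :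
    ∀ i, 2 ≤ i → i ≤ n →
      (∀ t, t ≤ 2 ^ (i - 1) + 2 * n - 1 → xd i (2 * n + 4 - 2 * i) t = false) ∧
      (∀ l, 1 ≤ l → l % 2 = 1 → ∀ t,
        l * 2 ^ (i - 1) + 2 * n ≤ t → t ≤ (l + 1) * 2 ^ (i - 1) + 2 * n - 1 →
        xd i (2 * n + 4 - 2 * i) t = true) ∧
      (∀ l, 2 ≤ l → l % 2 = 0 → ∀ t,
        l * 2 ^ (i - 1) + 2 * n ≤ t → t ≤ (l + 1) * 2 ^ (i - 1) + 2 * n - 1 →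
        xd i (2 * n + 4 - 2 * i) t = false) := by
  -- characterization of x 2 and x2'
  have hx2spec : ∀ t, x 2 t = decide (t/2 % 2 = 1) ∧ x2' t = decide ((t+1)/2 % 2 = 1) := by
    intro t
    induction t with
    | zero =>
      refine ⟨?_, ?_⟩
      · rw [hx0 2 (by omega) hn]; simp
      · rw [hx2'0]; simp
    | succ t ih =>
      refine ⟨?_, ?_⟩
      · rw [hx2 t, ih.2]
      · rw [hx2' t, ih.1]
        rcases Nat.eq_zero_or_pos t with ht | ht
        · subst ht; rw [hI0]; simp
        · rw [hI t ht]
          simp only [Bool.false_or, ← decide_not, decide_eq_decide]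
          omega
  -- main characterization of x i and y i
  have main : ∀ i, 2 ≤ i → i ≤ n →
      (∀ t, x i t = decide (2*i-4 ≤ t ∧ (t-(2*i-4))/2^(i-1) % 2 = 1)) ∧
      (i < n → ∀ t, y i t = decide (2*i-2 ≤ t ∧ 2^i - 2 ≤ (t-(2*i-2)) % 2^i)) := by
    intro i hi2
    induction i, hi2 using Nat.le_induction with
    | base =>
      intro _
      constructor
      · intro t
        simpa using (hx2spec t).1
      · intro h2n
        have hy20 : y 2 0 = false := hy0 2 le_rfl (by omega)
        have hy21 : y 2 1 = false := by
          rw [hyi 2 (by omega) h2n 0, hy'0 2 le_rfl (by omega)]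
        have hyrec : ∀ t, y 2 (t+2) = x 2 t := by
          intro t
          rw [show t+2 = t+1+1 from rfl, hyi 2 (by omega) h2n (t+1), hy2' t]
        apply two_step
        · rw [hy20]; symm; rw [decide_eq_false_iff_not]; rintro ⟨hA, -⟩; omega
        · rw [hy21]; symm; rw [decide_eq_false_iff_not]; rintro ⟨hA, -⟩; omega
        · intro t _
          rw [hyrec t, (hx2spec t).1, decide_eq_decide]
          have h4 : (2:ℕ)^2 = 4 := by norm_num
          rw [h4]
          omega
    | succ i hi2 ih =>
      intro hin1
      have hilt : i < n := by omega
      obtain ⟨IHx0, IHy0⟩ := ih (by omega)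
      have IHy := IHy0 hilt
      have IHx : ∀ t, x i t = decide (2*i-4 ≤ t ∧ (t-(2*i-4))/2^(i-1) % 2 = 1) := IHx0
      have hQ : 2 ≤ 2^i := by
        calc (2:ℕ) = 2^1 := rfl
        _ ≤ 2^i := Nat.pow_le_pow_right (by norm_num) (by omega)
      -- recurrence for x (i+1)
      have hrec : ∀ t, x (i+1) (t+2) = xor (y i t) (x (i+1) t) := by
        intro t
        have e := hxi (i+1) (by omega) hin1 (t+1)
        simp only [Nat.add_sub_cancel] at e
        rw [show t+2 = t+1+1 from rfl, e, hai i (by omega) hilt t, hbi i (by omega) hilt t]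
        cases y i t <;> cases x (i+1) t <;> rfl
      have h0 : x (i+1) 0 = false := hx0 (i+1) (by omega) hin1
      have h1 : x (i+1) 1 = false := by
        have e := hxi (i+1) (by omega) hin1 0
        simp only [Nat.add_sub_cancel] at e
        rw [show (1:ℕ) = 0+1 from rfl, e, ha0 i (by omega) hilt, hb0 i (by omega) hilt]
        rfl
      have Xspec : ∀ t, x (i+1) t = decide (2*i-2 ≤ t ∧ (t-(2*i-2))/2^i % 2 = 1) := by
        apply two_step
        · rw [h0]; symm; rw [decide_eq_false_iff_not]; rintro ⟨hA, -⟩; omega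
        · rw [h1]; symm; rw [decide_eq_false_iff_not]; rintro ⟨hA, -⟩; omega
        · intro t ihx
          rw [hrec t, ihx, IHy t]
          by_cases hc : 2*i-2 ≤ t
          · have hc2 : 2*i-2 ≤ t + 2 := by omega
            have hs : t + 2 - (2*i-2) = (t - (2*i-2)) + 2 := by omega
            simp only [hc, hc2, true_and, hs]
            exact (step_arith (2^i) (t - (2*i-2)) hQ).symm
          · have hlt : t + 2 - (2*i-2) < 2^i := by omega
            simp only [hc, false_and, decide_false, Bool.xor_false]
            symm; rw [decide_eq_false_iff_not]
            rintro ⟨hA, hB⟩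
            rw [Nat.div_eq_of_lt hlt] at hB
            omega
      have Yspec : i+1 < n → ∀ t,
          y (i+1) t = decide (2*(i+1)-2 ≤ t ∧ 2^(i+1) - 2 ≤ (t-(2*(i+1)-2)) % 2^(i+1)) := by
        intro hin
        have he : 2*(i+1)-2 = 2*i := by omega
        have hpow : (2:ℕ)^(i+1) = 2*2^i := by rw [pow_succ]; ring
        rw [he, hpow]
        have hrecy : ∀ t, y (i+1) (t+2) = (x (i+1) t && y i t) := by
          intro t
          have e2 := hyi' (i+1) (by omega) hin t
          simp only [Nat.add_sub_cancel] at e2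
          rw [show t+2 = t+1+1 from rfl, hyi (i+1) (by omega) hin (t+1), e2]
        apply two_step
        · rw [hy0 (i+1) (by omega) (by omega)]
          symm; rw [decide_eq_false_iff_not]; rintro ⟨hA, -⟩; omega
        · rw [show (1:ℕ) = 0+1 from rfl, hyi (i+1) (by omega) hin 0,
            hy'0 (i+1) (by omega) (by omega)]
          symm; rw [decide_eq_false_iff_not]; rintro ⟨hA, -⟩; omega
        · intro t _
          rw [hrecy t, Xspec t, IHy t]
          by_cases hc : 2*i-2 ≤ t
          · have hc2 : 2*i ≤ t+2 := by omega
            have hs : t+2-(2*i) = t - (2*i-2) := by omega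
            simp only [hc, hc2, true_and, hs]
            exact (y_arith (2^i) (t-(2*i-2)) hQ).symm
          · have hc2 : ¬(2*i ≤ t+2) := by omega
            simp [hc, hc2]
      constructor
      · intro t
        have e1 : 2*(i+1)-4 = 2*i-2 := by omega
        have e2 : (i+1)-1 = i := by omega
        rw [e1, e2]
        exact Xspec t
      · exact Yspec
  -- delay chain
  have hdel : ∀ i, 2 ≤ i → i ≤ n → ∀ j, 1 ≤ j → j ≤ 2*n+4-2*i → ∀ t,
      xd i j t = if t < j then false else x i (t - j) := by
    intro i hi2 hin j
    induction j with
    | zero => intro h; omega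
    | succ j ihj =>
      intro _ hjle t
      rcases Nat.eq_zero_or_pos j with hj0 | hj0
      · subst hj0
        cases t with
        | zero => rw [hxd0 i 1 hi2 hin (by omega) hjle]; simp
        | succ t => rw [hxd1 i hi2 hin t]; simp
      · cases t with
        | zero => rw [hxd0 i (j+1) hi2 hin (by omega) hjle]; simp
        | succ t =>
          have e := hxdj i (j+1) hi2 hin (by omega) hjle t
          simp only [Nat.add_sub_cancel] at e
          rw [e, ihj hj0 (by omega) t]
          by_cases h : t < j
          · simp [h, show t+1 < j+1 by omega]
          · simp [h, show ¬(t+1 < j+1) by omega, show t+1-(j+1) = t-j by omega]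
  -- conclusion
  intro i hi2 hin
  have hP : 2 ≤ 2^(i-1) := by
    calc (2:ℕ) = 2^1 := rfl
    _ ≤ 2^(i-1) := Nat.pow_le_pow_right (by norm_num) (by omega)
  have hxspec := (main i hi2 hin).1
  have hJ1 : 1 ≤ 2*n+4-2*i := by omega
  have hfin : ∀ t, xd i (2*n+4-2*i) t = decide (2*n ≤ t ∧ (t-2*n)/2^(i-1) % 2 = 1) := by
    intro t
    rw [hdel i hi2 hin _ hJ1 le_rfl t]
    by_cases h : t < 2*n+4-2*i
    · rw [if_pos h]; symm; rw [decide_eq_false_iff_not]; rintro ⟨hA, -⟩; omega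
    · rw [if_neg h, hxspec (t - (2*n+4-2*i))]
      have e2 : t - (2*n+4-2*i) - (2*i-4) = t - 2*n := by omega
      rw [e2, decide_eq_decide]
      constructor
      · rintro ⟨h1, h2⟩; exact ⟨by omega, h2⟩
      · rintro ⟨h1, h2⟩; exact ⟨by omega, h2⟩
  refine ⟨?_, ?_, ?_⟩
  · intro t ht
    rw [hfin t, decide_eq_false_iff_not]
    rintro ⟨h1, h2⟩
    have hd : (t - 2*n)/2^(i-1) = 0 := Nat.div_eq_of_lt (by omega)
    omega
  · intro l hl1 hl2 t ht1 ht2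
    have hmul : (l+1) * 2^(i-1) = l * 2^(i-1) + 2^(i-1) := by ring
    rw [hfin t, decide_eq_true_eq]
    have hd : (t - 2*n)/2^(i-1) = l := Nat.div_eq_of_lt_le (by omega) (by omega)
    exact ⟨by omega, by rw [hd]; exact hl2⟩
  · intro l hl1 hl2 t ht1 ht2
    have hmul : (l+1) * 2^(i-1) = l * 2^(i-1) + 2^(i-1) := by ring
    rw [hfin t, decide_eq_false_iff_not]
    rintro ⟨h1, h2⟩
    have hd : (t - 2*n)/2^(i-1) = l := Nat.div_eq_of_lt_le (by omega) (by omega)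
    omega
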